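/- There exists an absolute constant C > 0 such that for every real number U ≥ 1, every positive integer N, and every sequence of complex numbers (a_n)_{1 ≤ n ≤ N}, one has ∫_{-U}^{U} |∑_{n=1}^{N} a_n n^{iu}|^2 du ≤ C (U + N) ∑_{n=1}^{N} |a_n|^2. -/

import Mathlib

open MeasureTheory Complex

open Finset


lemma ls_minsum {A : ℝ} (hA : 0 < A) (N : ℕ) :
    ∑ k ∈ Icc 1 N, min 1 (A / (k : ℝ) ^ 2) ≤ 1 + 2 * Real.sqrt A := by
  set K : ℕ := ⌈Real.sqrt A⌉₊ with hKdef
  have hsA : 0 < Real.sqrt A := Real.sqrt_pos.mpr hA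
  have hK1 : 1 ≤ K := Nat.one_le_ceil_iff.mpr hsA
  have hKA : Real.sqrt A ≤ K := Nat.le_ceil _
  have hKA' : (K : ℝ) ≤ Real.sqrt A + 1 := by
    have := Nat.ceil_lt_add_one (Real.sqrt_nonneg A)
    linarith
  rw [← Finset.sum_filter_add_sum_filter_not (Icc 1 N) (· ≤ K)]
  have h1 : ∑ k ∈ (Icc 1 N).filter (· ≤ K), min 1 (A / (k : ℝ) ^ 2) ≤ Real.sqrt A + 1 := by
    calc ∑ k ∈ (Icc 1 N).filter (· ≤ K), min 1 (A / (k : ℝ) ^ 2)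
        ≤ ∑ k ∈ (Icc 1 N).filter (· ≤ K), 1 := Finset.sum_le_sum fun k _ => min_le_left _ _
      _ = ((Icc 1 N).filter (· ≤ K)).card := by simp
      _ ≤ (Icc 1 K).card := by
          apply Nat.cast_le.mpr
          apply Finset.card_le_card
          intro k hk
          simp only [mem_filter, mem_Icc] at hk ⊢
          exact ⟨hk.1.1, hk.2⟩
      _ = (K : ℝ) := by simp
      _ ≤ Real.sqrt A + 1 := hKA'
  have h2 : ∑ k ∈ (Icc 1 N).filter (fun k => ¬ k ≤ K), min 1 (A / (k : ℝ) ^ 2)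
      ≤ Real.sqrt A := by
    have hsub : (Icc 1 N).filter (fun k => ¬ k ≤ K) ⊆ Ioc K N := by
      intro k hk
      simp only [mem_filter, mem_Icc, not_le] at hk
      exact Finset.mem_Ioc.mpr ⟨hk.2, hk.1.2⟩
    calc ∑ k ∈ (Icc 1 N).filter (fun k => ¬ k ≤ K), min 1 (A / (k : ℝ) ^ 2)
        ≤ ∑ k ∈ Ioc K N, min 1 (A / (k : ℝ) ^ 2) :=
          Finset.sum_le_sum_of_subset_of_nonneg hsub (fun k _ _ => by positivity)
      _ ≤ ∑ k ∈ Ioc K N, (A / (k : ℝ) ^ 2) :=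
          Finset.sum_le_sum fun k _ => min_le_right _ _
      _ = A * ∑ k ∈ Ioc K N, ((k : ℝ) ^ 2)⁻¹ := by
          simp_rw [div_eq_mul_inv]; rw [Finset.mul_sum]
      _ ≤ A * (K : ℝ)⁻¹ := by
          apply mul_le_mul_of_nonneg_left ?_ hA.le
          rcases le_or_gt N K with h | h
          · have : Ioc K N = ∅ := Finset.Ioc_eq_empty (by omega)
            rw [this]; simp
          · exact (sum_Ioc_inv_sq_le_sub (by omega) h.le).trans (by
              have : 0 ≤ (N:ℝ)⁻¹ := by positivity
              linarith)
      _ ≤ A / Real.sqrt A := by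
          rw [← div_eq_mul_inv]
          apply div_le_div_of_nonneg_left hA.le hsA hKA
      _ = Real.sqrt A := Real.div_sqrt
  linarith

lemma ls_loggap {m n N : ℕ} (hm : 1 ≤ m) (hmN : m ≤ N) (hn : 1 ≤ n) (hnN : n ≤ N) :
    ((n : ℝ) - m) ^ 2 / (N : ℝ) ^ 2 ≤ (Real.log n - Real.log m) ^ 2 := by
  have key : ∀ p q : ℕ, 1 ≤ p → p ≤ q → q ≤ N →
      ((q : ℝ) - p) / N ≤ Real.log q - Real.log p := by
    intro p q hp hpq hqN
    have hp0 : (0 : ℝ) < p := by exact_mod_cast hp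
    have hq0 : (0 : ℝ) < q := lt_of_lt_of_le hp0 (by exact_mod_cast hpq)
    have hN0 : (0 : ℝ) < N := lt_of_lt_of_le hq0 (by exact_mod_cast hqN)
    have h1 : Real.log ((p : ℝ) / q) ≤ (p : ℝ) / q - 1 :=
      Real.log_le_sub_one_of_pos (by positivity)
    rw [Real.log_div hp0.ne' hq0.ne'] at h1
    have h2 : 1 - (p : ℝ) / q ≤ Real.log q - Real.log p := by linarith
    have h3 : ((q : ℝ) - p) / N ≤ ((q : ℝ) - p) / q := by
      apply div_le_div_of_nonneg_left ?_ hq0 ?_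
      · linarith [(by exact_mod_cast hpq : (p:ℝ) ≤ q)]
      · exact_mod_cast hqN
    have h4 : ((q : ℝ) - p) / q = 1 - (p : ℝ) / q := by field_simp
    linarith
  have hN0 : (0 : ℝ) < N := by
    have : (1:ℝ) ≤ N := by exact_mod_cast hm.trans hmN
    linarith
  rcases le_total m n with h | h
  · have := key m n hm h hnN
    have hnum : (0:ℝ) ≤ ((n:ℝ) - m) / N := by
      apply div_nonneg ?_ hN0.le
      have : (m:ℝ) ≤ n := by exact_mod_cast h
      linarith
    calc ((n : ℝ) - m) ^ 2 / (N : ℝ) ^ 2 = (((n:ℝ) - m)/N)^2 := by rw [div_pow]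
      _ ≤ (Real.log n - Real.log m)^2 := by
          apply sq_le_sq' <;> nlinarith
  · have := key n m hn h hmN
    have hnum : (0:ℝ) ≤ ((m:ℝ) - n) / N := by
      apply div_nonneg ?_ hN0.le
      have : (n:ℝ) ≤ m := by exact_mod_cast h
      linarith
    calc ((n : ℝ) - m) ^ 2 / (N : ℝ) ^ 2 = (((m:ℝ) - n)/N)^2 := by ring
      _ ≤ (Real.log m - Real.log n)^2 := by
          apply sq_le_sq' <;> nlinarith
      _ = (Real.log n - Real.log m)^2 := by ring

lemma ls_row {N m : ℕ} (hm : m ∈ Icc 1 N) (g : ℕ → ℝ) (hg : ∀ k, 0 ≤ g k) (f : ℕ → ℝ)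
    (hfm : f m ≤ 1)
    (hf1 : ∀ n ∈ Icc 1 N, n < m → f n ≤ g (m - n))
    (hf2 : ∀ n ∈ Icc 1 N, m < n → f n ≤ g (n - m)) :
    ∑ n ∈ Icc 1 N, f n ≤ 1 + 2 * ∑ k ∈ Icc 1 N, g k := by
  simp only [mem_Icc] at hm
  rw [← Finset.add_sum_erase _ f (Finset.mem_Icc.mpr hm)]
  have e1 : ((Icc 1 N).erase m).filter (· < m) = Icc 1 (m - 1) := by
    ext n; simp only [mem_filter, mem_erase, mem_Icc]; omega
  have e2 : ((Icc 1 N).erase m).filter (fun n => ¬ n < m) = Icc (m + 1) N := by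
    ext n; simp only [mem_filter, mem_erase, mem_Icc]; omega
  have h1 : ∑ n ∈ ((Icc 1 N).erase m).filter (· < m), f n ≤ ∑ k ∈ Icc 1 N, g k := by
    rw [e1]
    calc ∑ n ∈ Icc 1 (m - 1), f n ≤ ∑ n ∈ Icc 1 (m - 1), g (m - n) := by
          apply Finset.sum_le_sum
          intro n hn; simp only [mem_Icc] at hn
          exact hf1 n (Finset.mem_Icc.mpr (by omega)) (by omega)
      _ = ∑ k ∈ Icc 1 (m - 1), g k := by
          apply Finset.sum_nbij' (fun n => m - n) (fun k => m - k)
          · intro n hn; simp only [mem_Icc] at hn ⊢; omega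
          · intro k hk; simp only [mem_Icc] at hk ⊢; omega
          · intro n hn; simp only [mem_Icc] at hn; omega
          · intro k hk; simp only [mem_Icc] at hk; omega
          · intro n _; rfl
      _ ≤ ∑ k ∈ Icc 1 N, g k := by
          apply Finset.sum_le_sum_of_subset_of_nonneg
          · apply Finset.Icc_subset_Icc le_rfl; omega
          · intro k _ _; exact hg k
  have h2 : ∑ n ∈ ((Icc 1 N).erase m).filter (fun n => ¬ n < m), f n ≤ ∑ k ∈ Icc 1 N, g k := by
    rw [e2]
    calc ∑ n ∈ Icc (m + 1) N, f n ≤ ∑ n ∈ Icc (m + 1) N, g (n - m) := by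
          apply Finset.sum_le_sum
          intro n hn; simp only [mem_Icc] at hn
          exact hf2 n (Finset.mem_Icc.mpr (by omega)) (by omega)
      _ = ∑ k ∈ Icc 1 (N - m), g k := by
          apply Finset.sum_nbij' (fun n => n - m) (fun k => k + m)
          · intro n hn; simp only [mem_Icc] at hn ⊢; omega
          · intro k hk; simp only [mem_Icc] at hk ⊢; omega
          · intro n hn; simp only [mem_Icc] at hn; omega
          · intro k hk; simp only [mem_Icc] at hk; omega
          · intro n _; rfl
      _ ≤ ∑ k ∈ Icc 1 N, g k := by
          apply Finset.sum_le_sum_of_subset_of_nonneg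
          · apply Finset.Icc_subset_Icc le_rfl; omega
          · intro k _ _; exact hg k
  have := Finset.sum_filter_add_sum_filter_not ((Icc 1 N).erase m) (· < m) f
  linarith

lemma ls_schur (s : Finset ℕ) (c : ℕ → ℝ) (w : ℕ → ℕ → ℝ) (R : ℝ)
    (hc : ∀ n, 0 ≤ c n) (hw : ∀ n m, 0 ≤ w n m) (hsym : ∀ n m, w n m = w m n)
    (hrow : ∀ m ∈ s, ∑ n ∈ s, w n m ≤ R) :
    ∑ n ∈ s, ∑ m ∈ s, c n * c m * w n m ≤ (∑ m ∈ s, c m ^ 2) * R := by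
  have key : ∀ n ∈ s, ∑ m ∈ s, w m n ≤ R := hrow
  have hrow' : ∀ n ∈ s, ∑ m ∈ s, w n m ≤ R := by
    intro n hn
    calc ∑ m ∈ s, w n m = ∑ m ∈ s, w m n := Finset.sum_congr rfl fun m _ => hsym n m
      _ ≤ R := key n hn
  calc ∑ n ∈ s, ∑ m ∈ s, c n * c m * w n m
      ≤ ∑ n ∈ s, ∑ m ∈ s, (c n ^ 2 / 2 * w n m + c m ^ 2 / 2 * w n m) := by
        apply Finset.sum_le_sum; intro n _
        apply Finset.sum_le_sum; intro m _
        nlinarith [sq_nonneg (c n - c m), hw n m]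
    _ = ∑ n ∈ s, ∑ m ∈ s, c n ^ 2 / 2 * w n m + ∑ n ∈ s, ∑ m ∈ s, c m ^ 2 / 2 * w n m := by
        simp only [Finset.sum_add_distrib]
    _ = ∑ n ∈ s, c n ^ 2 / 2 * ∑ m ∈ s, w n m + ∑ m ∈ s, c m ^ 2 / 2 * ∑ n ∈ s, w n m := by
        rw [Finset.sum_comm (f := fun n m => c m ^ 2 / 2 * w n m)]
        simp_rw [← Finset.mul_sum]
    _ ≤ ∑ n ∈ s, c n ^ 2 / 2 * R + ∑ m ∈ s, c m ^ 2 / 2 * R := by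
        apply add_le_add <;> (apply Finset.sum_le_sum; intro n hn) <;>
          apply mul_le_mul_of_nonneg_left ?_ (by positivity)
        · exact hrow' n hn
        · exact hrow n hn
    _ = (∑ m ∈ s, c m ^ 2) * R := by
        rw [← Finset.sum_add_distrib, Finset.sum_mul]
        apply Finset.sum_congr rfl; intro m _; ring
set_option maxHeartbeats 1600000 in
/-- **Gallagher's large sieve inequality.**
There is an absolute constant `C > 0` such that for every `U ≥ 1`, every positive
integer `N` and every sequence of complex numbers `a`, one has
`∫_{-U}^{U} ‖∑_{n=1}^{N} a n * n^{iu}‖² du ≤ C (U + N) ∑_{n=1}^{N} ‖a n‖²`. -/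
theorem large_sieve_one_dim :
    ∃ C : ℝ, 0 < C ∧ ∀ (U : ℝ), 1 ≤ U → ∀ (N : ℕ), 0 < N → ∀ (a : ℕ → ℂ),
      (∫ u in (-U)..U,
          ‖∑ n ∈ Finset.Icc 1 N, a n * (n : ℂ) ^ (Complex.I * (u : ℂ))‖ ^ 2)
        ≤ C * (U + N) * ∑ n ∈ Finset.Icc 1 N, ‖a n‖ ^ 2 := by
  refine ⟨100, by norm_num, fun U hU N hN a => ?_⟩
  have hU0 : (0 : ℝ) < U := lt_of_lt_of_le one_pos hU
  set F : ℝ → ℂ := fun u => ∑ n ∈ Icc 1 N, a n * Complex.exp (Complex.I * (Real.log n : ℂ) * (u:ℂ)) with hF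
  set b : ℝ := (U ^ 2)⁻¹ with hbdef
  have hb : 0 < b := by positivity
  set W : ℝ → ℝ := fun u => Real.exp (-b * u ^ 2) with hW
  set B2 : ℝ := ∑ n ∈ Icc 1 N, ‖a n‖ ^ 2 with hB2
  have hB2nn : 0 ≤ B2 := Finset.sum_nonneg fun n _ => by positivity
  -- rewrite cpow as exp
  have hrw : ∀ u : ℝ, ∑ n ∈ Finset.Icc 1 N, a n * (n : ℂ) ^ (Complex.I * (u : ℂ)) = F u := by
    intro u
    apply Finset.sum_congr rfl
    intro n hn
    have hn1 : 1 ≤ n := (Finset.mem_Icc.mp hn).1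
    have hne : (n : ℂ) ≠ 0 := Nat.cast_ne_zero.mpr (by omega)
    congr 1
    rw [Complex.cpow_def_of_ne_zero hne, ← Complex.natCast_log]
    congr 1
    ring
  -- continuity of F
  have hFc : Continuous F := by
    apply continuous_finset_sum
    intro n _
    exact continuous_const.mul (Complex.continuous_exp.comp (by continuity))
  -- boundedness of F
  set B : ℝ := ∑ n ∈ Icc 1 N, ‖a n‖ with hBdef
  have hFb : ∀ u : ℝ, ‖F u‖ ≤ B := by
    intro u
    refine (norm_sum_le _ _).trans (le_of_eq (Finset.sum_congr rfl fun n _ => ?_))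
    rw [norm_mul]
    have : ‖Complex.exp (Complex.I * (Real.log n : ℂ) * (u:ℂ))‖ = 1 := by
      have hre : (Complex.I * (Real.log (n:ℕ) : ℂ) * (u:ℂ)).re = 0 := by
        simp only [Complex.mul_re, Complex.mul_im, Complex.I_re, Complex.I_im,
          Complex.ofReal_re, Complex.ofReal_im]
        ring
      rw [Complex.norm_exp, hre, Real.exp_zero]
    rw [this, mul_one]
  have hWc : Continuous W := by
    apply Real.continuous_exp.comp; continuity
  have hWnn : ∀ u, 0 ≤ W u := fun u => Real.exp_pos _ |>.le
  have hWint : Integrable W := integrable_exp_neg_mul_sq hb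
  -- step 1
  have step1 : (∫ u in (-U)..U, ‖F u‖ ^ 2)
      ≤ Real.exp 1 * ∫ u in (-U)..U, ‖F u‖ ^ 2 * W u := by
    rw [← intervalIntegral.integral_const_mul]
    apply intervalIntegral.integral_mono_on (by linarith)
    · exact ((hFc.norm.pow 2)).intervalIntegrable _ _
    · exact (continuous_const.mul ((hFc.norm.pow 2).mul hWc)).intervalIntegrable _ _
    · intro u hu
      have hu2 : u ^ 2 ≤ U ^ 2 := by
        rcases hu with ⟨h1, h2⟩
        nlinarith
      have h1 : (1:ℝ) ≤ Real.exp 1 * W u := by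
        rw [hW, ← Real.exp_add]
        apply Real.one_le_exp
        have : b * u ^ 2 ≤ 1 := by
          rw [hbdef]
          rw [inv_mul_le_iff₀ (by positivity)]
          linarith
        linarith
      nlinarith [sq_nonneg ‖F u‖, hWnn u]
  -- integrability of the weighted norm
  have hPint : Integrable (fun u => ‖F u‖ ^ 2 * W u) := by
    apply hWint.bdd_mul (c := B ^ 2) ((hFc.norm.pow 2)).aestronglyMeasurable
    exact Filter.Eventually.of_forall fun u => by
      show ‖‖F u‖ ^ 2‖ ≤ B ^ 2
      rw [Real.norm_eq_abs, _root_.abs_of_nonneg (by positivity)]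
      have := hFb u
      have h0 : (0:ℝ) ≤ ‖F u‖ := norm_nonneg _
      nlinarith
  -- step 2
  have step2 : (∫ u in (-U)..U, ‖F u‖ ^ 2 * W u) ≤ ∫ u, ‖F u‖ ^ 2 * W u := by
    rw [intervalIntegral.integral_of_le (by linarith)]
    apply setIntegral_le_integral hPint
    filter_upwards with u
    positivity
  -- the complex weighted integrand
  set Q : ℝ → ℂ := fun u => (F u * (starRingEnd ℂ) (F u)) * ((W u : ℝ) : ℂ) with hQ
  have hQre : ∀ u, (Q u).re = ‖F u‖ ^ 2 * W u := by
    intro u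
    calc (Q u).re = (((Complex.normSq (F u) : ℂ)) * ((W u : ℝ) : ℂ)).re := by
          simp only [hQ]; rw [Complex.mul_conj]
      _ = Complex.normSq (F u) * W u := by rw [← Complex.ofReal_mul, Complex.ofReal_re]
      _ = ‖F u‖ ^ 2 * W u := by rw [Complex.normSq_eq_norm_sq]
  have hQint : Integrable Q := by
    apply (hWint.ofReal (𝕜 := ℂ)).bdd_mul (c := B ^ 2)
    · exact ((hFc.mul (Complex.continuous_conj.comp hFc))).aestronglyMeasurable
    · refine Filter.Eventually.of_forall fun u => ?_
      rw [norm_mul, RCLike.norm_conj]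
      have := hFb u
      have h0 : (0:ℝ) ≤ ‖F u‖ := norm_nonneg _
      nlinarith
  have step3 : (∫ u, ‖F u‖ ^ 2 * W u) = (∫ u, Q u).re := by
    have h := integral_re (𝕜 := ℂ) hQint
    simp only [RCLike.re_eq_complex_re] at h
    rw [← h]
    congr 1
    funext u
    exact (hQre u).symm
  -- expansion of Q
  set t : ℕ → ℕ → ℂ := fun n m => ((Real.log n - Real.log m : ℝ) : ℂ) with ht
  have hQexp : ∀ u : ℝ, Q u = ∑ n ∈ Icc 1 N, ∑ m ∈ Icc 1 N,
      (a n * (starRingEnd ℂ) (a m)) * (cexp (Complex.I * t n m * u) * cexp (-(b:ℂ) * u ^ 2)) := by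
    intro u
    rw [hQ, hF]
    simp only [map_sum, map_mul]
    rw [Finset.sum_mul_sum, Finset.sum_mul]
    apply Finset.sum_congr rfl
    intro n _
    rw [Finset.sum_mul]
    apply Finset.sum_congr rfl
    intro m _
    have hWu : ((W u : ℝ) : ℂ) = cexp (-(b:ℂ) * (u:ℂ) ^ 2) := by
      rw [show W u = Real.exp (-b * u ^ 2) from rfl, Complex.ofReal_exp]
      congr 1
      push_cast
      ring
    have key : ∀ (x y X Y Z : ℂ), x * cexp X * (y * cexp Y) * cexp Z
        = (x * y) * cexp (X + Y + Z) := by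
      intros x y X Y Z
      rw [Complex.exp_add, Complex.exp_add]
      ring
    rw [hWu, ← Complex.exp_conj, key, ← Complex.exp_add]
    congr 1
    simp only [map_mul, Complex.conj_I, Complex.conj_ofReal, ht]
    push_cast
    ring
  -- gaussian integrability
  have hbC : (0:ℝ) < ((b : ℂ)).re := by simpa using hb
  have hgint : ∀ s : ℂ, Integrable (fun u : ℝ => cexp (Complex.I * s * u) * cexp (-(b:ℂ) * u ^ 2)) := by
    intro s
    have h := integrable_cexp_quadratic (b := (b:ℂ)) hbC (Complex.I * s) 0
    apply h.congr
    filter_upwards with u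
    rw [← Complex.exp_add]
    congr 1
    ring
  set Jv : ℕ → ℕ → ℂ := fun n m =>
    ((Real.pi : ℂ) / (b:ℂ)) ^ (1/2 : ℂ) * cexp (-(t n m) ^ 2 / (4 * (b:ℂ))) with hJv
  have step4 : (∫ u, Q u) = ∑ n ∈ Icc 1 N, ∑ m ∈ Icc 1 N,
      (a n * (starRingEnd ℂ) (a m)) * Jv n m := by
    rw [show Q = fun (u : ℝ) => ∑ n ∈ Icc 1 N, ∑ m ∈ Icc 1 N,
        (a n * (starRingEnd ℂ) (a m)) * (cexp (Complex.I * t n m * (u:ℂ)) * cexp (-(b:ℂ) * (u:ℂ) ^ 2))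
      from funext hQexp]
    rw [integral_finset_sum _ (fun n _ => integrable_finset_sum _
      (fun m _ => ((hgint (t n m)).const_mul _)))]
    apply Finset.sum_congr rfl
    intro n _
    rw [integral_finset_sum _ (fun m _ => ((hgint (t n m)).const_mul _))]
    apply Finset.sum_congr rfl
    intro m _
    rw [MeasureTheory.integral_const_mul]
    congr 1
    rw [hJv]
    exact fourierIntegral_gaussian hbC (t n m)
  -- pointwise gaussian kernel bound and row sums
  set E : ℕ → ℕ → ℝ := fun n m => Real.exp (-(U^2 * (Real.log n - Real.log m)^2)/4) with hE
  have hEnn : ∀ n m, 0 ≤ E n m := fun n m => (Real.exp_pos _).le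
  have hEsymm : ∀ n m, E n m = E m n := by
    intro n m; simp only [hE]; exact congrArg Real.exp (by ring)
  have hN0 : (0:ℝ) < N := by exact_mod_cast hN
  set A : ℝ := 4*(N:ℝ)^2/U^2 with hA
  have hApos : 0 < A := by positivity
  -- bound on ‖Jv‖
  have hJbound : ∀ n m : ℕ, ‖Jv n m‖ ≤ 2*U*E n m := by
    intro n m
    rw [hJv, norm_mul]
    have h2 : ‖cexp (-(t n m) ^ 2 / (4 * (b:ℂ)))‖ = E n m := by
      have harg : -(t n m) ^ 2 / (4 * (b:ℂ))
          = (((-(U^2 * (Real.log n - Real.log m)^2)/4 : ℝ)) : ℂ) := by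
        rw [ht, hbdef]
        have hU2 : ((U:ℝ):ℂ)^2 ≠ 0 := pow_ne_zero 2 (by exact_mod_cast hU0.ne')
        push_cast
        field_simp
      rw [harg, ← Complex.ofReal_exp, Complex.norm_real, Real.norm_eq_abs,
        _root_.abs_of_nonneg (Real.exp_pos _).le]
    rw [h2]
    apply mul_le_mul_of_nonneg_right ?_ (hEnn n m)
    have hbase : ((Real.pi : ℂ)) / ((b:ℝ):ℂ) = (((Real.pi / b : ℝ)) : ℂ) := by push_cast; ring
    rw [hbase, Complex.norm_cpow_eq_rpow_re_of_pos (by positivity)]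
    have hre : ((1/2 : ℂ)).re = 1/2 := by norm_num
    rw [hre]
    have hval : Real.pi / b ≤ (2*U)^2 := by
      rw [hbdef]
      have := Real.pi_le_four
      have h4 : (2*U)^2 = 4*U^2 := by ring
      rw [h4]
      have hdi : Real.pi / (U^2)⁻¹ = Real.pi * U^2 := by field_simp
      rw [hdi]
      nlinarith [Real.pi_le_four, Real.pi_pos, sq_nonneg U, hU]
    calc (Real.pi / b) ^ (1/2 : ℝ) ≤ ((2*U)^2) ^ (1/2 : ℝ) := by
          apply Real.rpow_le_rpow (by positivity) hval (by norm_num)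
      _ = 2*U := by
          rw [← Real.sqrt_eq_rpow, Real.sqrt_sq (by positivity)]
  -- step 5
  have step5 : (∫ u, Q u).re ≤ ∑ n ∈ Icc 1 N, ∑ m ∈ Icc 1 N,
      ‖a n‖ * ‖a m‖ * (2*U*E n m) := by
    rw [step4]
    refine (Complex.re_le_norm _).trans ?_
    refine (norm_sum_le _ _).trans ?_
    refine Finset.sum_le_sum fun n _ => ?_
    refine (norm_sum_le _ _).trans ?_
    refine Finset.sum_le_sum fun m _ => ?_
    rw [norm_mul, norm_mul, RCLike.norm_conj]
    exact mul_le_mul_of_nonneg_left (hJbound n m) (by positivity)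
  -- row sums
  have hrowE : ∀ m ∈ Icc 1 N, ∑ n ∈ Icc 1 N, (2*U*E n m) ≤ 6*U + 16*N := by
    intro m hm
    obtain ⟨hm1, hmN⟩ := Finset.mem_Icc.mp hm
    have hcore : ∀ n ∈ Icc 1 N, n ≠ m → ∀ k : ℕ, 1 ≤ k →
        ((k:ℝ))^2 = ((n:ℝ) - m)^2 → E n m ≤ min 1 (A / (k:ℝ)^2) := by
      intro n hn hne k hk hk2
      obtain ⟨hn1, hnN⟩ := Finset.mem_Icc.mp hn
      have hgap : ((n : ℝ) - m) ^ 2 / (N : ℝ) ^ 2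
          ≤ (Real.log n - Real.log m) ^ 2 := ls_loggap hm1 hmN hn1 hnN
      have hδne : Real.log n - Real.log m ≠ 0 := by
        have hlog : Real.log n ≠ Real.log m := by
          have hn0 : (0:ℝ) < n := by exact_mod_cast hn1
          have hm0 : (0:ℝ) < m := by exact_mod_cast hm1
          rcases lt_or_gt_of_ne hne with h | h
          · exact ne_of_lt (Real.log_lt_log hn0 (by exact_mod_cast h))
          · exact ne_of_gt (Real.log_lt_log hm0 (by exact_mod_cast h))
        exact sub_ne_zero.mpr hlog
      have hδ2 : 0 < (Real.log n - Real.log m)^2 :=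
        lt_of_le_of_ne (sq_nonneg _) (Ne.symm (pow_ne_zero 2 hδne))
      set x : ℝ := U^2 * (Real.log n - Real.log m)^2 / 4 with hx
      have hxpos : 0 < x := by positivity
      have hEx : E n m = Real.exp (-x) := by
        simp only [hE, hx]; exact congrArg Real.exp (by ring)
      refine le_min ?_ ?_
      · rw [hEx, ← Real.exp_zero]
        exact Real.exp_le_exp.mpr (by linarith)
      · have h1 : E n m ≤ 1/x := by
          rw [hEx, Real.exp_neg, one_div]
          exact inv_anti₀ hxpos (by linarith [Real.add_one_le_exp x])
        have hk0 : (0:ℝ) < (k:ℝ) := by exact_mod_cast hk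
        have hlpos : (0:ℝ) < (k:ℝ)^2/(N:ℝ)^2*U^2/4 := by positivity
        have hklN : (k:ℝ)^2/(N:ℝ)^2*U^2/4 ≤ x := by
          rw [hx, hk2]
          nlinarith [hgap, sq_nonneg U]
        have h2 : 1/x ≤ A/(k:ℝ)^2 := by
          refine (one_div_le_one_div_of_le hlpos hklN).trans (le_of_eq ?_)
          rw [hA]
          field_simp
        exact h1.trans h2
    have hsum : ∑ n ∈ Icc 1 N, E n m ≤ 1 + 2*(1 + 2*Real.sqrt A) := by
      have hg : ∀ k : ℕ, 0 ≤ min 1 (A/(k:ℝ)^2) := fun k => le_min zero_le_one (by positivity)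
      have hfm : E m m ≤ 1 := by simp [hE]
      have h := ls_row hm (fun k => min 1 (A/(k:ℝ)^2)) hg (fun n => E n m) hfm
        (fun n hn hlt => hcore n hn (Nat.ne_of_lt hlt) (m - n) (by omega)
          (by rw [Nat.cast_sub hlt.le]; ring))
        (fun n hn hlt => hcore n hn (Nat.ne_of_gt hlt) (n - m) (by omega)
          (by rw [Nat.cast_sub hlt.le]))
      refine h.trans ?_
      linarith [ls_minsum hApos N]
    have hsqrtA : Real.sqrt A = 2*N/U := by
      rw [hA, show 4*(N:ℝ)^2/U^2 = (2*N/U)^2 by field_simp; ring]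
      exact Real.sqrt_sq (by positivity)
    rw [hsqrtA] at hsum
    calc ∑ n ∈ Icc 1 N, (2*U*E n m) = 2*U * ∑ n ∈ Icc 1 N, E n m := by
          rw [Finset.mul_sum]
      _ ≤ 2*U*(1 + 2*(1 + 2*(2*N/U))) := by
          exact mul_le_mul_of_nonneg_left hsum (by positivity)
      _ = 6*U + 16*N := by field_simp; ring
  -- Schur-type bound
  have step6 : ∑ n ∈ Icc 1 N, ∑ m ∈ Icc 1 N, ‖a n‖ * ‖a m‖ * (2*U*E n m)
      ≤ B2 * (6*U + 16*N) := by
    rw [hB2]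
    apply ls_schur (Icc 1 N) (fun n => ‖a n‖) (fun n m => 2*U*E n m) (6*U + 16*N)
      (fun n => norm_nonneg _) (fun n m => by positivity)
      (fun n m => by show 2*U*E n m = 2*U*E m n; rw [hEsymm n m]) hrowE
  -- final assembly
  have he3 : Real.exp 1 ≤ 3 := by
    have := Real.exp_one_lt_d9
    linarith
  calc (∫ u in (-U)..U,
          ‖∑ n ∈ Finset.Icc 1 N, a n * (n : ℂ) ^ (Complex.I * (u : ℂ))‖ ^ 2)
      = ∫ u in (-U)..U, ‖F u‖ ^ 2 := by
        apply intervalIntegral.integral_congr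
        intro u _
        show ‖∑ n ∈ Finset.Icc 1 N, a n * (n : ℂ) ^ (Complex.I * (u : ℂ))‖ ^ 2 = ‖F u‖ ^ 2
        rw [hrw u]
    _ ≤ Real.exp 1 * ∫ u in (-U)..U, ‖F u‖ ^ 2 * W u := step1
    _ ≤ Real.exp 1 * ∫ u, ‖F u‖ ^ 2 * W u :=
        mul_le_mul_of_nonneg_left step2 (Real.exp_pos 1).le
    _ = Real.exp 1 * (∫ u, Q u).re := by rw [step3]
    _ ≤ Real.exp 1 * ∑ n ∈ Icc 1 N, ∑ m ∈ Icc 1 N, ‖a n‖ * ‖a m‖ * (2*U*E n m) :=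
        mul_le_mul_of_nonneg_left step5 (Real.exp_pos 1).le
    _ ≤ Real.exp 1 * (B2 * (6*U + 16*N)) :=
        mul_le_mul_of_nonneg_left step6 (Real.exp_pos 1).le
    _ ≤ 3 * (B2 * (6*U + 16*N)) :=
        mul_le_mul_of_nonneg_right he3 (mul_nonneg hB2nn (by positivity))
    _ ≤ 100 * (U + N) * B2 := by nlinarith [hB2nn, hU0, hN0]
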